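/- Let R > 0, τ > 0, k ∈ {0,1}, and let Ω ∈ ℝ^{3×3} be skew-symmetric. Then there is a constant C(R, τ, Ω) > 0 such that for all y, z ∈ B_R with y ≠ z: ∫₀^∞ (|y − τ t e₁ − e^{−tΩ} z|² + t)^{−3/2 − k/2} dt ≤ C(R, τ, Ω) · |y − z|^{−1−k}. -/

import Mathlib

open NormedSpace MeasureTheory Matrix
open scoped Nat

noncomputable def toE3 (v : Fin 3 → ℝ) : EuclideanSpace ℝ (Fin 3) :=
  (EuclideanSpace.equiv (Fin 3) ℝ).symm v

section matkey
attribute [local instance] Matrix.linftyOpNormedRing Matrix.linftyOpNormedAlgebra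
  Matrix.linftyOpNormedAddCommGroup

lemma matkey (M : Matrix (Fin 3) (Fin 3) ℝ) (z : EuclideanSpace ℝ (Fin 3)) :
    toE3 ((exp M).mulVec z) = exp (Matrix.toEuclideanCLM (𝕜 := ℝ) M) z := by
  have hc : Continuous (Matrix.toEuclideanCLM (𝕜 := ℝ) (n := Fin 3)) :=
    LinearMap.continuous_of_finiteDimensional
      { toFun := ⇑(Matrix.toEuclideanCLM (𝕜 := ℝ) (n := Fin 3)),
        map_add' := fun a b => map_add _ a b,
        map_smul' := fun c a => map_smul _ c a }
  have h := map_exp (Matrix.toEuclideanCLM (𝕜 := ℝ) (n := Fin 3)) hc M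
  have h2 := congrArg (fun T => T z) h
  rw [← h2]
  rfl
end matkey

lemma norm_exp_sub_one_le' {𝔸 : Type*} [NormedRing 𝔸] [NormedAlgebra ℝ 𝔸] [CompleteSpace 𝔸]
    (B : 𝔸) : ‖exp B - 1‖ ≤ ‖B‖ * Real.exp ‖B‖ := by
  have hs : Summable (fun n : ℕ => ((n ! : ℝ))⁻¹ • B ^ n) := expSeries_summable' (𝕂 := ℝ) B
  have h0 : exp B - 1 = ∑' n : ℕ, (((n+1)! : ℝ))⁻¹ • B ^ (n+1) := by
    simp only [exp_eq_tsum (𝕂 := ℝ)]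
    rw [Summable.tsum_eq_zero_add hs]
    simp
  have hns : Summable (fun n : ℕ => ‖(((n+1)! : ℝ))⁻¹ • B ^ (n+1)‖) :=
    ((summable_nat_add_iff 1).mpr (norm_expSeries_summable' (𝕂 := ℝ) B))
  have hg : Summable (fun n : ℕ => ‖B‖ * (‖B‖ ^ n / n !)) :=
    (Real.summable_pow_div_factorial ‖B‖).mul_left _
  rw [h0]
  refine (norm_tsum_le_tsum_norm hns).trans ?_
  have hle : ∀ n : ℕ, ‖(((n+1)! : ℝ))⁻¹ • B ^ (n+1)‖ ≤ ‖B‖ * (‖B‖ ^ n / n !) := by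
    intro n
    rw [norm_smul]
    have h1 : ‖B ^ (n+1)‖ ≤ ‖B‖ ^ (n+1) := norm_pow_le' B (Nat.succ_pos n)
    have h2 : (((n+1)! : ℝ))⁻¹ ≤ ((n ! : ℝ))⁻¹ := by
      apply inv_anti₀
      · positivity
      · exact_mod_cast Nat.factorial_le (Nat.le_succ n)
    have hnn : (0:ℝ) ≤ ((n ! : ℝ))⁻¹ := by positivity
    calc ‖(((n+1)! : ℝ))⁻¹‖ * ‖B ^ (n+1)‖ ≤ ((n ! : ℝ))⁻¹ * ‖B‖ ^ (n+1) := by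
          rw [Real.norm_eq_abs, abs_of_nonneg (by positivity)]
          exact mul_le_mul h2 h1 (norm_nonneg _) hnn
      _ = ‖B‖ * (‖B‖ ^ n / n !) := by ring
  refine (Summable.tsum_le_tsum hle hns hg).trans ?_
  rw [tsum_mul_left]
  have : ∑' n : ℕ, (‖B‖ ^ n / n ! : ℝ) = Real.exp ‖B‖ := by
    rw [Real.exp_eq_exp_ℝ, exp_eq_tsum_div]
  rw [this]

lemma cont_shift {e b : ℝ} (s : Set ℝ) (hs : ∀ x ∈ s, 0 < b + x) :
    ContinuousOn (fun t : ℝ => (b + t) ^ e) s := by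
  apply ContinuousOn.rpow_const
  · exact (continuous_const.add continuous_id).continuousOn
  · exact fun x hx => Or.inl (ne_of_gt (hs x hx))

lemma int_shift_Ioi {e b : ℝ} (he : e < -1) (hb : 0 < b) :
    IntegrableOn (fun t : ℝ => (b + t) ^ e) (Set.Ioi b) := by
  refine Integrable.mono' (integrableOn_Ioi_rpow_of_lt he hb) ?_ ?_
  · exact (cont_shift (Set.Ioi b) (fun x hx => by
      have : b < x := hx
      linarith)).aestronglyMeasurable measurableSet_Ioi
  · filter_upwards [ae_restrict_mem measurableSet_Ioi] with t ht
    have htb : b < t := ht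
    have ht0 : 0 < t := hb.trans htb
    rw [Real.norm_eq_abs, abs_of_nonneg (Real.rpow_nonneg (by linarith) _)]
    exact Real.rpow_le_rpow_of_nonpos ht0 (by linarith) (by linarith)

lemma int_shift_Ioc {e b : ℝ} (hb : 0 < b) :
    IntegrableOn (fun t : ℝ => (b + t) ^ e) (Set.Ioc 0 b) := by
  refine (ContinuousOn.integrableOn_Icc (cont_shift (Set.Icc 0 b) (fun x hx => by
    have := hx.1; linarith))).mono_set Set.Ioc_subset_Icc_self

lemma int_shift {e b : ℝ} (he : e < -1) (hb : 0 < b) :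
    IntegrableOn (fun t : ℝ => (b + t) ^ e) (Set.Ioi 0) := by
  rw [← Set.Ioc_union_Ioi_eq_Ioi hb.le]
  exact (int_shift_Ioc hb).union (int_shift_Ioi he hb)

lemma int_bound_shift {e b : ℝ} (he : e < -1) (hb : 0 < b) :
    ∫ t in Set.Ioi (0:ℝ), (b + t) ^ e ≤ b ^ (e+1) + -b ^ (e+1) / (e+1) := by
  have he0 : e ≤ 0 := by linarith
  rw [← Set.Ioc_union_Ioi_eq_Ioi hb.le,
    setIntegral_union Set.Ioc_disjoint_Ioi_same measurableSet_Ioi (int_shift_Ioc hb)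
      (int_shift_Ioi he hb)]
  have h1 : ∫ t in Set.Ioc (0:ℝ) b, (b + t) ^ e ≤ b ^ (e+1) := by
    have hconst : IntegrableOn (fun _ : ℝ => b ^ e) (Set.Ioc 0 b) :=
      integrableOn_const measure_Ioc_lt_top.ne
    have := setIntegral_mono_on (int_shift_Ioc hb) hconst measurableSet_Ioc
      (fun t ht => Real.rpow_le_rpow_of_nonpos hb (by linarith [ht.1]) he0)
    refine this.trans ?_
    rw [setIntegral_const, Real.volume_real_Ioc_of_le hb.le, smul_eq_mul, sub_zero]
    rw [show e + 1 = 1 + e by ring, Real.rpow_add hb, Real.rpow_one]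
  have h2 : ∫ t in Set.Ioi b, (b + t) ^ e ≤ -b ^ (e+1) / (e+1) := by
    have := setIntegral_mono_on (int_shift_Ioi he hb) (integrableOn_Ioi_rpow_of_lt he hb)
      measurableSet_Ioi (fun t ht => by
        have htb : b < t := ht
        exact Real.rpow_le_rpow_of_nonpos (hb.trans htb) (by linarith) he0)
    refine this.trans ?_
    rw [integral_Ioi_rpow_of_lt he hb]
  linarith

lemma rot_bound (T : EuclideanSpace ℝ (Fin 3) →L[ℝ] EuclideanSpace ℝ (Fin 3))
    (z : EuclideanSpace ℝ (Fin 3)) (t : ℝ) (ht0 : 0 ≤ t) :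
    ‖exp (-(t • T)) z - z‖ ≤ t * ‖T‖ * Real.exp (t * ‖T‖) * ‖z‖ := by
  have h1 : exp (-(t • T)) z - z = (exp (-(t • T)) - 1) z := by
    simp [ContinuousLinearMap.sub_apply]
  have hnorm : ‖-(t • T)‖ = t * ‖T‖ := by
    rw [norm_neg, show ‖t • T‖ = ‖t‖ * ‖T‖ from norm_smul t T, Real.norm_eq_abs,
      abs_of_nonneg ht0]
  rw [h1]
  calc ‖(exp (-(t • T)) - 1) z‖ ≤ ‖exp (-(t • T)) - 1‖ * ‖z‖ :=
        ContinuousLinearMap.le_opNorm _ _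
    _ ≤ (‖-(t • T)‖ * Real.exp ‖-(t • T)‖) * ‖z‖ :=
        mul_le_mul_of_nonneg_right (norm_exp_sub_one_le' _) (norm_nonneg z)
    _ = t * ‖T‖ * Real.exp (t * ‖T‖) * ‖z‖ := by rw [hnorm]

set_option maxHeartbeats 2000000 in
theorem time_integral_local (R τ : ℝ) (hR : 0 < R) (hτ : 0 < τ) (k : ℝ)
    (hk : k = 0 ∨ k = 1) (Ω : Matrix (Fin 3) (Fin 3) ℝ) (hΩ : Ωᵀ = -Ω) :
    ∃ C : ℝ, 0 < C ∧ ∀ y z : EuclideanSpace ℝ (Fin 3), ‖y‖ < R → ‖z‖ < R → y ≠ z →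
      (∫ t in Set.Ioi (0:ℝ),
          (‖y - (τ * t) • (EuclideanSpace.single 0 (1:ℝ))
             - toE3 ((exp (-(t • Ω))).mulVec z)‖ ^ 2 + t) ^ (-(3/2) - k/2))
        ≤ C * ‖y - z‖ ^ (-1 - k) := by
  have hk0 : 0 ≤ k := by rcases hk with h | h <;> simp [h]
  have hk1 : k ≤ 1 := by rcases hk with h | h <;> simp [h]
  obtain ⟨T, hTdef⟩ : ∃ T : EuclideanSpace ℝ (Fin 3) →L[ℝ] EuclideanSpace ℝ (Fin 3),
      T = Matrix.toEuclideanCLM (𝕜 := ℝ) Ω := ⟨_, rfl⟩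
  obtain ⟨N, hNdef⟩ : ∃ x : ℝ, x = ‖T‖ := ⟨_, rfl⟩
  have hN0 : 0 ≤ N := hNdef ▸ norm_nonneg T
  obtain ⟨K, hKdef⟩ : ∃ x : ℝ, x = Real.exp ((R / τ) * N) := ⟨_, rfl⟩
  have hK1 : 1 ≤ K := by rw [hKdef]; exact Real.one_le_exp (by positivity)
  have hK0 : (0:ℝ) ≤ K := le_trans zero_le_one hK1
  obtain ⟨M, hMdef⟩ : ∃ x : ℝ, x = τ + N * K * R + 1 := ⟨_, rfl⟩
  have hNKR : (0:ℝ) ≤ N * K * R := mul_nonneg (mul_nonneg hN0 hK0) hR.le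
  have hM1 : 1 ≤ M := by rw [hMdef]; linarith
  have hMτ : τ ≤ M := by rw [hMdef]; linarith
  have hM0 : 0 < M := by linarith
  obtain ⟨e, hedef⟩ : ∃ x : ℝ, x = -(3/2) - k/2 := ⟨_, rfl⟩
  have he : e < -1 := by rw [hedef]; linarith
  have he0 : e ≤ 0 := by linarith
  obtain ⟨m, hmdef⟩ : ∃ x : ℝ, x = (1 + k) / 2 := ⟨_, rfl⟩
  have hm0 : 0 < m := by rw [hmdef]; linarith
  have hm12 : 1/2 ≤ m := by rw [hmdef]; linarith
  have hm1 : m ≤ 1 := by rw [hmdef]; linarith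
  have he1 : e + 1 = -m := by rw [hedef, hmdef]; ring
  rw [show (-(3/2) - k/2 : ℝ) = e from hedef.symm]
  refine ⟨12 + 2 * (1 + 4 * M * R), by positivity, ?_⟩
  intro y z hy hz hyz
  obtain ⟨u, hudef⟩ : ∃ u : EuclideanSpace ℝ (Fin 3), u = EuclideanSpace.single 0 (1:ℝ) :=
    ⟨_, rfl⟩
  have hu_norm : ‖u‖ = 1 := by rw [hudef, EuclideanSpace.norm_single]; norm_num
  obtain ⟨d, hddef⟩ : ∃ x : ℝ, x = ‖y - z‖ := ⟨_, rfl⟩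
  have hd0 : 0 < d := by rw [hddef]; exact norm_sub_pos_iff.mpr hyz
  have hd2R : d ≤ 2 * R := by
    have h1 : ‖y - z‖ ≤ ‖y‖ + ‖z‖ := norm_sub_le y z
    rw [hddef]; linarith
  obtain ⟨t₁, ht₁def⟩ : ∃ x : ℝ, x = d / (2 * M) := ⟨_, rfl⟩
  have ht₁ : 0 < t₁ := by rw [ht₁def]; positivity
  have ht₁R : t₁ ≤ R / τ := by
    rw [ht₁def, div_le_div_iff₀ (by linarith) hτ]
    nlinarith
  obtain ⟨b, hbdef⟩ : ∃ x : ℝ, x = (d / 2) ^ 2 := ⟨_, rfl⟩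
  have hb : 0 < b := by rw [hbdef]; positivity
  -- rewrite integrand via the CLM exponential
  have hEt : ∀ t : ℝ, toE3 ((exp (-(t • Ω))).mulVec z) = exp (-(t • T)) z := by
    intro t
    rw [matkey, map_neg, _root_.map_smul, ← hTdef]
  rw [← hddef, ← hudef]
  simp only [hEt]
  -- Lipschitz-type bound for the rotation term
  have hexp : ∀ t : ℝ, 0 ≤ t → t ≤ R / τ → ‖exp (-(t • T)) z - z‖ ≤ N * K * R * t := by
    intro t ht0 htR
    refine (rot_bound T z t ht0).trans ?_
    have e1 : Real.exp (t * ‖T‖) ≤ K := by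
      rw [hKdef, hNdef]
      exact Real.exp_le_exp.mpr (mul_le_mul_of_nonneg_right htR (norm_nonneg T))
    have e2 : ‖z‖ ≤ R := hz.le
    have e3 : (0:ℝ) ≤ t * ‖T‖ := mul_nonneg ht0 (norm_nonneg T)
    have e5 : t * ‖T‖ * Real.exp (t * ‖T‖) ≤ t * ‖T‖ * K :=
      mul_le_mul_of_nonneg_left e1 e3
    have e6 : (0:ℝ) ≤ t * ‖T‖ * K := le_trans (by positivity) e5
    calc t * ‖T‖ * Real.exp (t * ‖T‖) * ‖z‖
        ≤ t * ‖T‖ * K * ‖z‖ := mul_le_mul_of_nonneg_right e5 (norm_nonneg z)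
      _ ≤ t * ‖T‖ * K * R := mul_le_mul_of_nonneg_left e2 e6
      _ = N * K * R * t := by rw [hNdef]; ring
  -- lower bound on the norm for small times
  have hlow : ∀ t ∈ Set.Ioc (0:ℝ) t₁, d / 2 ≤ ‖y - (τ * t) • u - exp (-(t • T)) z‖ := by
    intro t ht
    have ht0 : 0 < t := ht.1
    have htt₁ : t ≤ t₁ := ht.2
    have htR : t ≤ R / τ := htt₁.trans ht₁R
    have h1 : ‖(τ * t) • u‖ = τ * t := by
      rw [show ‖(τ * t) • u‖ = ‖τ * t‖ * ‖u‖ from norm_smul _ _, hu_norm, mul_one,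
        Real.norm_eq_abs, abs_of_nonneg (by positivity)]
    have h2 := hexp t ht0.le htR
    have h3 : y - (τ * t) • u - exp (-(t • T)) z
        = (y - z) - ((τ * t) • u) - (exp (-(t • T)) z - z) := by abel
    have h4 : ‖y - z‖ ≤ ‖(y - z) - ((τ * t) • u) - (exp (-(t • T)) z - z)‖
        + ‖(τ * t) • u‖ + ‖exp (-(t • T)) z - z‖ := by
      have heq : y - z = ((y - z) - ((τ * t) • u) - (exp (-(t • T)) z - z))
          + ((τ * t) • u) + (exp (-(t • T)) z - z) := by abel
      calc ‖y - z‖ = ‖((y - z) - ((τ * t) • u) - (exp (-(t • T)) z - z))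
          + ((τ * t) • u) + (exp (-(t • T)) z - z)‖ := by rw [← heq]
        _ ≤ _ := norm_add₃_le
    rw [h3]
    have h5 : M * t₁ = d / 2 := by
      rw [ht₁def]; field_simp
    have h6 : M * t ≤ M * t₁ := mul_le_mul_of_nonneg_left htt₁ hM0.le
    have h7 : τ * t + N * K * R * t ≤ M * t :=
      calc τ * t + N * K * R * t = (τ + N * K * R) * t := by ring
        _ ≤ M * t := mul_le_mul_of_nonneg_right (by rw [hMdef]; linarith) ht0.le
    rw [← hddef] at h4
    rw [h1] at h4
    linarith
  -- pointwise bound by the majorant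
  have hpt : ∀ t ∈ Set.Ioi (0:ℝ),
      (‖y - (τ * t) • u - exp (-(t • T)) z‖ ^ 2 + t) ^ e
        ≤ (b + t) ^ e + (Set.Ioi t₁).indicator (fun s : ℝ => s ^ e) t := by
    intro t ht
    have ht0 : 0 < t := ht
    by_cases hcase : t ≤ t₁
    · have hmem : t ∉ Set.Ioi t₁ := by simp [hcase, not_lt]
      rw [Set.indicator_of_notMem hmem, add_zero]
      have hge : d / 2 ≤ ‖y - (τ * t) • u - exp (-(t • T)) z‖ := hlow t ⟨ht0, hcase⟩
      have hsq : b ≤ ‖y - (τ * t) • u - exp (-(t • T)) z‖ ^ 2 := by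
        rw [hbdef]
        exact pow_le_pow_left₀ (by positivity) hge 2
      exact Real.rpow_le_rpow_of_nonpos (by positivity) (by linarith) he0
    · push_neg at hcase
      rw [Set.indicator_of_mem (Set.mem_Ioi.mpr hcase)]
      have h1 : (‖y - (τ * t) • u - exp (-(t • T)) z‖ ^ 2 + t) ^ e ≤ t ^ e := by
        refine Real.rpow_le_rpow_of_nonpos ht0 ?_ he0
        have h2 : (0:ℝ) ≤ ‖y - (τ * t) • u - exp (-(t • T)) z‖ ^ 2 := by positivity
        linarith
      have h2 : (0:ℝ) ≤ (b + t) ^ e := Real.rpow_nonneg (by positivity) _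
      linarith
  -- integrability
  have hg1 : IntegrableOn (fun t : ℝ => (b + t) ^ e) (Set.Ioi 0) := int_shift he hb
  have hg2 : IntegrableOn ((Set.Ioi t₁).indicator (fun s : ℝ => s ^ e)) (Set.Ioi 0) :=
    ((integrableOn_Ioi_rpow_of_lt he ht₁).integrable_indicator measurableSet_Ioi).integrableOn
  have hg : IntegrableOn (fun t : ℝ =>
      (b + t) ^ e + (Set.Ioi t₁).indicator (fun s : ℝ => s ^ e) t) (Set.Ioi 0) :=
    hg1.add hg2
  have hFcont : ContinuousOn (fun t : ℝ =>
      (‖y - (τ * t) • u - exp (-(t • T)) z‖ ^ 2 + t) ^ e) (Set.Ioi 0) := by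
    have hE : Continuous fun t : ℝ => exp (-(t • T)) :=
      let +nondep : NormedAlgebra ℚ (EuclideanSpace ℝ (Fin 3) →L[ℝ] EuclideanSpace ℝ (Fin 3)) :=
        .restrictScalars ℚ ℝ _
      exp_continuous.comp ((continuous_id.smul continuous_const).neg)
    have hvec : Continuous fun t : ℝ => y - (τ * t) • u - exp (-(t • T)) z := by
      refine Continuous.sub (Continuous.sub continuous_const ?_) (hE.clm_apply continuous_const)
      exact ((continuous_const.mul continuous_id).smul continuous_const)
    have hbase : Continuous fun t : ℝ =>
        ‖y - (τ * t) • u - exp (-(t • T)) z‖ ^ 2 + t :=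
      ((hvec.norm.pow 2).add continuous_id)
    refine ContinuousOn.rpow_const hbase.continuousOn (fun t ht => Or.inl ?_)
    have ht0 : (0:ℝ) < t := ht
    have : (0:ℝ) < ‖y - (τ * t) • u - exp (-(t • T)) z‖ ^ 2 + t := by positivity
    exact ne_of_gt this
  have hF : IntegrableOn (fun t : ℝ =>
      (‖y - (τ * t) • u - exp (-(t • T)) z‖ ^ 2 + t) ^ e) (Set.Ioi 0) := by
    refine Integrable.mono' hg (hFcont.aestronglyMeasurable measurableSet_Ioi) ?_
    filter_upwards [ae_restrict_mem measurableSet_Ioi] with t ht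
    have ht0 : (0:ℝ) < t := ht
    rw [Real.norm_eq_abs, abs_of_nonneg (Real.rpow_nonneg (by positivity) _)]
    exact hpt t ht
  -- the main integral estimate
  have hmono := setIntegral_mono_on hF hg measurableSet_Ioi hpt
  have hsplit : ∫ t in Set.Ioi (0:ℝ),
      ((b + t) ^ e + (Set.Ioi t₁).indicator (fun s : ℝ => s ^ e) t)
      = (∫ t in Set.Ioi (0:ℝ), (b + t) ^ e)
        + ∫ t in Set.Ioi (0:ℝ), (Set.Ioi t₁).indicator (fun s : ℝ => s ^ e) t :=
    integral_add hg1 hg2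
  have hind : ∫ t in Set.Ioi (0:ℝ), (Set.Ioi t₁).indicator (fun s : ℝ => s ^ e) t
      = -t₁ ^ (e+1) / (e+1) := by
    rw [setIntegral_indicator measurableSet_Ioi, Set.Ioi_inter_Ioi,
      max_eq_right ht₁.le, integral_Ioi_rpow_of_lt he ht₁]
  have hshift := int_bound_shift he hb
  -- arithmetic
  have hD : (0:ℝ) ≤ d ^ (-(1+k)) := Real.rpow_nonneg hd0.le _
  have hb_eq : b ^ (e+1) = d ^ (-(1+k)) * 2 ^ (1+k) := by
    rw [he1, hbdef, ← Real.rpow_natCast (d/2) 2, ← Real.rpow_mul (by positivity),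
      show ((2:ℕ):ℝ) * (-m) = -(1+k) by rw [hmdef]; push_cast; ring,
      Real.div_rpow hd0.le (by norm_num), Real.rpow_neg (by norm_num : (0:ℝ) ≤ 2),
      div_inv_eq_mul]
  have h2k : (2:ℝ) ^ (1+k) ≤ 4 := by
    calc (2:ℝ) ^ (1+k) ≤ (2:ℝ) ^ (2:ℝ) :=
          Real.rpow_le_rpow_of_exponent_le one_le_two (by linarith)
      _ = 4 := by
          rw [show (2:ℝ) = ((2:ℕ):ℝ) by norm_num, Real.rpow_natCast]; norm_num
  have hb_le : b ^ (e+1) ≤ 4 * d ^ (-(1+k)) := by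
    rw [hb_eq]
    nlinarith [Real.rpow_nonneg (show (0:ℝ) ≤ 2 by norm_num) (1+k)]
  have ht₁_le : t₁ ^ (e+1) ≤ (1 + 4 * M * R) * d ^ (-(1+k)) := by
    rw [he1, ht₁def, Real.div_rpow hd0.le (by positivity),
      Real.rpow_neg (by positivity : (0:ℝ) ≤ 2*M), div_inv_eq_mul]
    have hdm : d ^ (-m) = d ^ (-(1+k)) * d ^ m := by
      rw [← Real.rpow_add hd0]
      congr 1
      rw [hmdef]; ring
    rw [hdm]
    have hdmle : d ^ m ≤ (2*R) ^ m := Real.rpow_le_rpow hd0.le hd2R hm0.le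
    have hmul : (2*M) ^ m * (2*R) ^ m = (4*(M*R)) ^ m := by
      rw [← Real.mul_rpow (by positivity) (by positivity)]
      congr 1; ring
    have hfin : (4*(M*R)) ^ m ≤ 1 + 4 * M * R := by
      rcases le_or_gt (4*(M*R)) 1 with hle | hlt
      · have := Real.rpow_le_one (by positivity) hle hm0.le
        nlinarith [mul_pos hM0 hR]
      · have h1 : (4*(M*R)) ^ m ≤ (4*(M*R)) ^ (1:ℝ) :=
          Real.rpow_le_rpow_of_exponent_le hlt.le hm1
        rw [Real.rpow_one] at h1
        linarith
    calc d ^ (-(1+k)) * d ^ m * (2*M) ^ m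
        ≤ d ^ (-(1+k)) * (2*R) ^ m * (2*M) ^ m :=
          mul_le_mul_of_nonneg_right (mul_le_mul_of_nonneg_left hdmle hD)
            (Real.rpow_nonneg (by positivity) m)
      _ = (4*(M*R)) ^ m * d ^ (-(1+k)) := by rw [← hmul]; ring
      _ ≤ (1 + 4 * M * R) * d ^ (-(1+k)) := by nlinarith
  have hIa : (∫ t in Set.Ioi (0:ℝ), (b + t) ^ e) ≤ 12 * d ^ (-(1+k)) := by
    have hbnn : (0:ℝ) ≤ b ^ (e+1) := Real.rpow_nonneg hb.le _
    have hdiv : -b ^ (e+1) / (e+1) = b ^ (e+1) / m := by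
      rw [he1, div_neg, neg_div, neg_neg]
    have hdiv2 : b ^ (e+1) / m ≤ 2 * b ^ (e+1) := by
      rw [div_le_iff₀ hm0]
      nlinarith
    have := hshift
    rw [hdiv] at this
    linarith
  have hIb : -t₁ ^ (e+1) / (e+1) ≤ 2 * (1 + 4 * M * R) * d ^ (-(1+k)) := by
    have htnn : (0:ℝ) ≤ t₁ ^ (e+1) := Real.rpow_nonneg ht₁.le _
    have hdiv : -t₁ ^ (e+1) / (e+1) = t₁ ^ (e+1) / m := by
      rw [he1, div_neg, neg_div, neg_neg]
    have hdiv2 : t₁ ^ (e+1) / m ≤ 2 * t₁ ^ (e+1) := by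
      rw [div_le_iff₀ hm0]
      nlinarith
    rw [hdiv]
    nlinarith
  have hfinal : d ^ (-1 - k) = d ^ (-(1+k)) := by
    congr 1; ring
  rw [hfinal]
  calc (∫ t in Set.Ioi (0:ℝ),
        (‖y - (τ * t) • u - exp (-(t • T)) z‖ ^ 2 + t) ^ e)
      ≤ ∫ t in Set.Ioi (0:ℝ),
        ((b + t) ^ e + (Set.Ioi t₁).indicator (fun s : ℝ => s ^ e) t) := hmono
    _ = (∫ t in Set.Ioi (0:ℝ), (b + t) ^ e)
        + ∫ t in Set.Ioi (0:ℝ), (Set.Ioi t₁).indicator (fun s : ℝ => s ^ e) t := hsplit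
    _ ≤ 12 * d ^ (-(1+k)) + 2 * (1 + 4 * M * R) * d ^ (-(1+k)) := by
        rw [hind]
        exact add_le_add hIa hIb
    _ = (12 + 2 * (1 + 4 * M * R)) * d ^ (-(1+k)) := by ring
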